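/- Define F : ℝ² → ℝ² by F(v) = (1 + exp(−|v|²)) v, where |·| is the Euclidean norm. Then F is strongly monotone with constant 1 − √(2/e): for all v₁, v₂ ∈ ℝ², (F(v₁) − F(v₂)) · (v₁ − v₂) ≥ (1 − √(2/e)) |v₁ − v₂|². -/

import Mathlib

open scoped RealInnerProductSpace

/-- The derivative bound: `(1 - 2t²)e^{-t²} ≥ -√(2/e)`. -/
lemma deriv_lower_bound (t : ℝ) :
    0 ≤ Real.sqrt (2 / Real.exp 1) + (1 - 2 * t ^ 2) * Real.exp (-t ^ 2) := by
  set s := t ^ 2 with hs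
  have hs0 : 0 ≤ s := sq_nonneg t
  -- (2s - 1) e^{-s} ≤ 2 e^{-3/2}
  have h1 : (2 * s - 1) * Real.exp (-s) ≤ 2 * Real.exp (-(3/2 : ℝ)) := by
    have h2 : s - 3/2 + 1 ≤ Real.exp (s - 3/2) := Real.add_one_le_exp _
    have h3 : Real.exp (s - 3/2) * Real.exp (-s) = Real.exp (-(3/2 : ℝ)) := by
      rw [← Real.exp_add]; ring_nf
    nlinarith [Real.exp_pos (-s), Real.exp_nonneg (-s)]
  -- 2 e^{-3/2} ≤ √(2/e)
  have h4 : 2 * Real.exp (-(3/2 : ℝ)) ≤ Real.sqrt (2 / Real.exp 1) := by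
    rw [Real.le_sqrt (by positivity) (by positivity)]
    have he : (2 : ℝ) < Real.exp 1 := by
      linarith [Real.exp_one_gt_d9]
    have h5 : Real.exp (-(3/2 : ℝ)) ^ 2 = Real.exp (-(3 : ℝ)) := by
      rw [← Real.exp_nat_mul]; norm_num
    have h6 : Real.exp (-(3:ℝ)) * Real.exp 1 * Real.exp 1 * Real.exp 1 = 1 := by
      rw [← Real.exp_add, ← Real.exp_add, ← Real.exp_add]; norm_num
    have hde : 0 < Real.exp 1 := Real.exp_pos 1
    have hd3 : 0 < Real.exp (-(3:ℝ)) := Real.exp_pos _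
    rw [div_eq_mul_inv]
    have h7 : (2 * Real.exp (-(3/2:ℝ))) ^ 2 * Real.exp 1 ≤ 2 := by
      have h8 : Real.exp (-(3/2:ℝ)) ^ 2 * Real.exp 1 = Real.exp (-(2:ℝ)) := by
        rw [← Real.exp_nat_mul, ← Real.exp_add]; norm_num
      have h9 : Real.exp (-(2:ℝ)) * Real.exp 1 * Real.exp 1 = 1 := by
        rw [← Real.exp_add, ← Real.exp_add]; norm_num
      have h10 : Real.exp 1 * Real.exp 1 > 4 := by nlinarith
      have h11 : Real.exp (-(2:ℝ)) * 4 < 1 := by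
        calc Real.exp (-(2:ℝ)) * 4 < Real.exp (-(2:ℝ)) * (Real.exp 1 * Real.exp 1) :=
              mul_lt_mul_of_pos_left h10 (Real.exp_pos _)
          _ = 1 := by rw [← mul_assoc]; exact h9
      nlinarith [h8, h11]
    calc (2 * Real.exp (-(3/2:ℝ))) ^ 2
        = (2 * Real.exp (-(3/2:ℝ))) ^ 2 * Real.exp 1 * (Real.exp 1)⁻¹ := by
          field_simp
      _ ≤ 2 * (Real.exp 1)⁻¹ := by
          apply mul_le_mul_of_nonneg_right h7 (by positivity)
  nlinarith [Real.exp_nonneg (-s)]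

lemma hasDerivG (c t : ℝ) :
    HasDerivAt (fun t : ℝ => t * Real.exp (-t ^ 2) + c * t)
      ((1 - 2 * t ^ 2) * Real.exp (-t ^ 2) + c) t := by
  have h1 : HasDerivAt (fun t : ℝ => -t ^ 2) (-(2 * t)) t := by
    simpa using (hasDerivAt_pow 2 t).fun_neg
  have h2 := (Real.hasDerivAt_exp (-t ^ 2)).comp t h1
  have h3 := (hasDerivAt_id t).mul h2
  have h4 := h3.add ((hasDerivAt_id t).const_mul c)
  convert h4 using 1
  · rfl
  · rfl
  · rfl
  simp [Function.comp]
  ring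

/-- One-sided Lipschitz bound for `f(t) = t e^{-t²}`. -/
lemma one_sided (a b : ℝ) :
    -(Real.sqrt (2 / Real.exp 1)) * (a - b) ^ 2 ≤
      (a - b) * (a * Real.exp (-a ^ 2) - b * Real.exp (-b ^ 2)) := by
  set c := Real.sqrt (2 / Real.exp 1) with hc
  have hmono : Monotone (fun t : ℝ => t * Real.exp (-t ^ 2) + c * t) := by
    apply monotone_of_deriv_nonneg
    · exact fun t => (hasDerivG c t).differentiableAt
    · intro t
      rw [(hasDerivG c t).deriv]
      have := deriv_lower_bound t
      linarith
  rcases le_total a b with h | h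
  · have := hmono h
    simp only at this
    nlinarith
  · have := hmono h
    simp only at this
    nlinarith

/-- **Example 2 of the paper.** The map `F : ℝ² → ℝ²`, `F v = (1 + exp(−|v|²)) v`,
is strongly monotone with constant `1 − √(2/e)`. -/
theorem example2_strongly_monotone :
    let F : EuclideanSpace ℝ (Fin 2) → EuclideanSpace ℝ (Fin 2) :=
      fun v => (1 + Real.exp (-‖v‖ ^ 2)) • v
    ∀ v₁ v₂ : EuclideanSpace ℝ (Fin 2),
      (1 - Real.sqrt (2 / Real.exp 1)) * ‖v₁ - v₂‖ ^ 2 ≤ ⟪F v₁ - F v₂, v₁ - v₂⟫ := by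
  intro F v₁ v₂
  set a := ‖v₁‖ with ha
  set b := ‖v₂‖ with hb
  set p := ⟪v₁, v₂⟫ with hp
  have hcs : p ≤ a * b := real_inner_le_norm v₁ v₂
  have hc : 0 ≤ Real.sqrt (2 / Real.exp 1) := Real.sqrt_nonneg _
  have hEa : 0 ≤ Real.exp (-a ^ 2) := Real.exp_nonneg _
  have hEb : 0 ≤ Real.exp (-b ^ 2) := Real.exp_nonneg _
  have hnorm : ‖v₁ - v₂‖ ^ 2 = a ^ 2 - 2 * p + b ^ 2 := by
    rw [@norm_sub_sq_real, ← ha, ← hb, ← hp]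
  have hinner : ⟪F v₁ - F v₂, v₁ - v₂⟫ =
      (1 + Real.exp (-a ^ 2)) * (a ^ 2 - p) - (1 + Real.exp (-b ^ 2)) * (p - b ^ 2) := by
    have hcomm : (inner ℝ v₂ v₁ : ℝ) = p := by rw [real_inner_comm]
    simp only [F, inner_sub_left, inner_sub_right, real_inner_smul_left,
      real_inner_self_eq_norm_sq, ← ha, ← hb, ← hp, hcomm]
    ring
  rw [hnorm, hinner]
  have hkey := one_sided a b
  nlinarith [mul_nonneg (sub_nonneg.2 hcs) hc, mul_nonneg (sub_nonneg.2 hcs) hEa,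
    mul_nonneg (sub_nonneg.2 hcs) hEb]
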